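/- Reduction cost correspondence (Hamming case): under the DECIS'-3-Hamming to DECIS-2-Hamming reduction, for all strings v, w over Σ of equal length, δ₃(v,w) ≤ h if and only if δ₂(E(v), E(w)) ≤ 3h, where δ₃ is the distance using the allowed unit-cost 3-substitutions and δ₂ is the distance using the reduction's unit-cost 2-substitutions. -/

import Mathlib

/-- The augmented alphabet of the reduction from DECIS'-3-Hamming to
DECIS-2-Hamming: window pairs over `Σ ∪ {$}` (with `$` modelled by `none`),
plus the marker symbols `S⁻_{(ab)(de)}` and `S⁺_{(bc)(ef)}`. -/
inductive WSym (α : Type*) where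
  | pair : Option α → Option α → WSym α
  | left : α × α → α × α → WSym α
  | right : α × α → α × α → WSym α

/-- The `$`-padded version of a string. -/
def padS {α : Type*} (v : List α) : List (Option α) :=
  none :: (v.map some ++ [none])

/-- The sliding-window encoding of `v`: the length-`(n+1)` string of overlapping
pairs of consecutive symbols of `$v$`. -/
def encS {α : Type*} (v : List α) : List (WSym α) :=
  ((padS v).zip (padS v).tail).map fun q => WSym.pair q.1 q.2

/-- A `2`-substitution rewriting the factor `[x, y]` into `[x', y']`. -/
def Sub2 {β : Type*} (x y x' y' : β) (v w : List β) : Prop :=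
  ∃ p s : List β, v = p ++ [x, y] ++ s ∧ w = p ++ [x', y'] ++ s

/-- One application of an allowed `3`-substitution from `D`. -/
def Step3 {α : Type*} (D : Set ((α × α × α) × (α × α × α))) (v w : List α) : Prop :=
  ∃ r ∈ D, ∃ p s : List α,
    v = p ++ [r.1.1, r.1.2.1, r.1.2.2] ++ s ∧ w = p ++ [r.2.1, r.2.2.1, r.2.2.2] ++ s

/-- One application of a cost-1 `2`-substitution of the reduction: for each allowed
`3`-substitution `abc → def` in `D` we have `(ab)(bc) → S⁻_{(ab)(de)} S⁺_{(bc)(ef)}`,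
`(xa) S⁻_{(ab)(de)} → (xd)(de)` for all `x ∈ Σ ∪ {$}`, and
`S⁺_{(bc)(ef)} (cy) → (ef)(fy)` for all `y ∈ Σ ∪ {$}`.  All other
`2`-substitutions are forbidden. -/
def Step2 {α : Type*} (D : Set ((α × α × α) × (α × α × α))) (v w : List (WSym α)) : Prop :=
  ∃ a b c d e f : α, ((a, b, c), (d, e, f)) ∈ D ∧
    (Sub2 (WSym.pair (some a) (some b)) (WSym.pair (some b) (some c))
        (WSym.left (a, b) (d, e)) (WSym.right (b, c) (e, f)) v w ∨
     (∃ x : Option α, Sub2 (WSym.pair x (some a)) (WSym.left (a, b) (d, e))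
        (WSym.pair x (some d)) (WSym.pair (some d) (some e)) v w) ∨
     (∃ y : Option α, Sub2 (WSym.right (b, c) (e, f)) (WSym.pair (some c) y)
        (WSym.pair (some e) (some f)) (WSym.pair (some f) y) v w))

/-- A sequence of `m` steps of the relation `r` from `v` to `w`. -/
inductive StepChain {β : Type*} (r : β → β → Prop) : β → β → ℕ → Prop
  | refl (v : β) : StepChain r v v 0
  | tail {v u w : β} {m : ℕ} : StepChain r v u m → r u w → StepChain r v w (m + 1)

/-- Minimum number of steps of the relation `r` transforming `v` into `w`. -/
noncomputable def rDist {β : Type*} (r : β → β → Prop) (v w : β) : ℕ∞ :=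
  sInf {c : ℕ∞ | ∃ m : ℕ, StepChain r v w m ∧ c = (m : ℕ∞)}

/-! ### auxiliary machinery -/

namespace RedAux

variable {α : Type*} {β : Type*}

/-- window string of a padded letter list, given previous letter -/
def win : Option α → List (Option α) → List (WSym α)
  | _, [] => []
  | x, y :: t => .pair x y :: win y t

theorem win_append (x : Option α) (l₁ l₂ : List (Option α)) :
    win x (l₁ ++ l₂) = win x l₁ ++ win (l₁.getLastD x) l₂ := by
  induction l₁ generalizing x with
  | nil => simp [win]
  | cons y t ih =>
    rw [List.getLastD_cons, List.cons_append]
    show WSym.pair x y :: win y (t ++ l₂) = WSym.pair x y :: win y t ++ _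
    rw [ih y]; rfl

theorem zip_win (x : Option α) (l : List (Option α)) :
    (((x :: l).zip l).map fun q => WSym.pair q.1 q.2) = win x l := by
  induction l generalizing x with
  | nil => simp [win]
  | cons y t ih => simp [win, ← ih y, List.zip]

theorem encS_eq_win (v : List α) : encS v = win none (v.map some ++ [none]) := by
  rw [encS, padS, ← zip_win]; rfl

theorem win_pairs {x : Option α} {l : List (Option α)} :
    ∀ s ∈ win x l, ∃ a b, s = WSym.pair a b := by
  induction l generalizing x with
  | nil => simp [win]
  | cons y t ih =>
    intro s hs
    simp only [win, List.mem_cons] at hs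
    rcases hs with h | h
    · exact ⟨x, y, h⟩
    · exact ih s h

/-- second component decoding -/
def sc : WSym α → Option α
  | .pair _ y => y
  | .left _ q => some q.2
  | .right q _ => some q.1

theorem map_sc_win (x : Option α) (l : List (Option α)) :
    (win x l).map sc = l := by
  induction l generalizing x with
  | nil => simp [win]
  | cons y t ih => simp [win, sc, ih]

theorem rDist_le_iff {r : β → β → Prop} {v w : β} {n : ℕ} :
    rDist r v w ≤ (n : ℕ∞) ↔ ∃ m : ℕ, m ≤ n ∧ StepChain r v w m := by
  constructor
  · intro hle
    by_contra hne
    push_neg at hne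
    have h1 : ((n : ℕ∞) + 1) ≤ rDist r v w := by
      apply le_sInf
      rintro c ⟨m, hm, rfl⟩
      have : n < m := by
        by_contra h'
        exact absurd hm (by simpa using hne m (by omega))
      have : (n + 1 : ℕ) ≤ m := by omega
      calc ((n : ℕ∞) + 1) = ((n + 1 : ℕ) : ℕ∞) := by push_cast; ring
        _ ≤ (m : ℕ∞) := by exact_mod_cast this
    have := le_trans h1 hle
    have h2 : (n : ℕ∞) < (n : ℕ∞) + 1 := by
      exact (ENat.lt_add_one_iff (by exact_mod_cast ENat.coe_ne_top n)).mpr le_rfl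
    exact absurd this (not_le.mpr h2)
  · rintro ⟨m, hmn, hc⟩
    calc rDist r v w ≤ (m : ℕ∞) := sInf_le ⟨m, hc, rfl⟩
      _ ≤ (n : ℕ∞) := by exact_mod_cast hmn

theorem stepChain_append {r : β → β → Prop} {a b c : β} {m n : ℕ}
    (h1 : StepChain r a b m) (h2 : StepChain r b c n) : StepChain r a c (m + n) := by
  induction h2 with
  | refl => exact h1
  | tail h st ih => exact .tail ih st

end RedAux

namespace RedAux

variable {α : Type*}

inductive RSt (α : Type*) where
  | ok : Option α → RSt α
  | needL : α → α → RSt α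

/-- A partial derivation: from state `S`, consuming base letters `T`,
emitting symbols `u`, ending in state `E`, with pending cost `k`. -/
inductive Chunk : RSt α → List (Option α) → List (WSym α) → RSt α → ℕ → Prop
  | nil (S) : Chunk S [] [] S 0
  | cons {t u E k} (s y) : Chunk (.ok y) t u E k →
      Chunk (.ok s) (y :: t) (.pair s y :: u) E k
  | pre {t u E k} (s) (a d : α) : Chunk (.needL a d) t u E k →
      Chunk (.ok s) (some d :: t) (.pair s (some a) :: u) E k
  | lcons {t u E k} (a b d e : α) : Chunk (.ok (some e)) t u E k →
      Chunk (.needL a d) (some e :: t) (.left (a,b) (d,e) :: u) E (k+1)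
  | lcons' {t u E k} (a b d a' d' : α) : Chunk (.needL a' d') t u E k →
      Chunk (.needL a d) (some d' :: t) (.left (a,b) (d,a') :: u) E (k+1)
  | rcons {t u E k} (b c e f : α) : Chunk (.ok (some c)) t u E k →
      Chunk (.ok (some e)) (some f :: t) (.right (b,c) (e,f) :: u) E (k+1)

theorem chunk_append {S M E : RSt α} {T₁ T₂ u₁ u₂ k₁ k₂}
    (h1 : Chunk S T₁ u₁ M k₁) (h2 : Chunk M T₂ u₂ E k₂) :
    Chunk S (T₁ ++ T₂) (u₁ ++ u₂) E (k₁ + k₂) := by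
  induction h1 with
  | nil => simpa using h2
  | cons s y _ ih => exact .cons s y (ih h2)
  | pre s a d _ ih => exact .pre s a d (ih h2)
  | lcons a b d e _ ih =>
    have := Chunk.lcons a b d e (ih h2)
    simpa [Nat.add_right_comm] using this
  | lcons' a b d a' d' _ ih =>
    have := Chunk.lcons' a b d a' d' (ih h2)
    simpa [Nat.add_right_comm] using this
  | rcons b c e f _ ih =>
    have := Chunk.rcons b c e f (ih h2)
    simpa [Nat.add_right_comm] using this

theorem chunk_split {S E : RSt α} {T u₁ u₂ k}
    (h : Chunk S T (u₁ ++ u₂) E k) :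
    ∃ T₁ T₂ M k₁ k₂, T = T₁ ++ T₂ ∧ k = k₁ + k₂ ∧
      Chunk S T₁ u₁ M k₁ ∧ Chunk M T₂ u₂ E k₂ := by
  induction u₁ generalizing S T k with
  | nil => exact ⟨[], T, S, 0, k, rfl, (Nat.zero_add k).symm, .nil S, h⟩
  | cons x u₁' ih =>
    rw [List.cons_append] at h
    cases h with
    | cons s y h' =>
      obtain ⟨T₁, T₂, M, k₁, k₂, rfl, rfl, hc1, hc2⟩ := ih h'
      exact ⟨y :: T₁, T₂, M, k₁, k₂, rfl, rfl, .cons s y hc1, hc2⟩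
    | pre s a d h' =>
      obtain ⟨T₁, T₂, M, k₁, k₂, rfl, rfl, hc1, hc2⟩ := ih h'
      exact ⟨some d :: T₁, T₂, M, k₁, k₂, rfl, rfl, .pre s a d hc1, hc2⟩
    | lcons a b d e h' =>
      obtain ⟨T₁, T₂, M, k₁, k₂, rfl, rfl, hc1, hc2⟩ := ih h'
      exact ⟨some e :: T₁, T₂, M, k₁ + 1, k₂, rfl, by omega, .lcons a b d e hc1, hc2⟩
    | lcons' a b d a' d' h' =>
      obtain ⟨T₁, T₂, M, k₁, k₂, rfl, rfl, hc1, hc2⟩ := ih h'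
      exact ⟨some d' :: T₁, T₂, M, k₁ + 1, k₂, rfl, by omega, .lcons' a b d a' d' hc1, hc2⟩
    | rcons b c e f h' =>
      obtain ⟨T₁, T₂, M, k₁, k₂, rfl, rfl, hc1, hc2⟩ := ih h'
      exact ⟨some f :: T₁, T₂, M, k₁ + 1, k₂, rfl, by omega, .rcons b c e f hc1, hc2⟩

theorem win_chunk (T : List (Option α)) (s : Option α) :
    ∃ E, Chunk (.ok s) T (win s T) E 0 := by
  induction T generalizing s with
  | nil => exact ⟨.ok s, .nil _⟩
  | cons y T' ih =>
    obtain ⟨E, h⟩ := ih y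
    exact ⟨E, .cons s y h⟩

end RedAux

namespace RedAux

variable {α : Type*} {β : Type*}

theorem base_split {z : List α} {T₁ T₃ : List (Option α)} {a b c : α}
    (h : z.map some ++ [none] = T₁ ++ [some a, some b, some c] ++ T₃) :
    ∃ z₁ z₂, z = z₁ ++ [a, b, c] ++ z₂ ∧ T₁ = z₁.map some ∧ T₃ = z₂.map some ++ [none] := by
  induction T₁ generalizing z with
  | nil =>
    cases z with
    | nil => simp at h
    | cons a' z' =>
      cases z' with
      | nil => simp at h
      | cons b' z'' =>
        cases z'' with
        | nil => simp at h
        | cons c' z₃ =>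
          simp only [List.map_cons, List.cons_append, List.nil_append, List.cons.injEq,
            Option.some.injEq] at h
          obtain ⟨rfl, rfl, rfl, h⟩ := h
          exact ⟨[], z₃, by simp, rfl, h.symm⟩
  | cons x T₁' ih =>
    cases z with
    | nil =>
      have := congrArg List.length h
      simp at this
    | cons a' z' =>
      simp only [List.map_cons, List.cons_append, List.cons.injEq] at h
      obtain ⟨rfl, h⟩ := h
      obtain ⟨z₁, z₂, h1, h2, h3⟩ := ih h
      exact ⟨a' :: z₁, z₂, by simp [h1], by simp [h2], h3⟩

theorem last_ne {z : List α} {T₁ : List (Option α)} {d : α}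
    (h : z.map some ++ [none] = T₁ ++ [some d]) : False := by
  have := congrArg List.getLast? h
  rw [List.getLast?_concat, List.getLast?_concat] at this
  simp at this

/-- a `right` marker immediately followed by a `left` marker can never be removed -/
def Dead (u : List (WSym α)) : Prop :=
  ∃ p s q₁ q₂ q₃ q₄, u = p ++ [WSym.right q₁ q₂, WSym.left q₃ q₄] ++ s

theorem two_factor {p₁ s₁ p₂ s₂ : List β} {a₁ b₁ a₂ b₂ : β}
    (h₂ : p₁ ++ [a₁, b₁] ++ s₁ = p₂ ++ [a₂, b₂] ++ s₂) :
    (p₁ = p₂ ∧ a₁ = a₂ ∧ b₁ = b₂ ∧ s₁ = s₂) ∨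
    (p₂ = p₁ ++ [a₁] ∧ b₁ = a₂ ∧ s₁ = b₂ :: s₂) ∨
    (p₁ = p₂ ++ [a₂] ∧ b₂ = a₁ ∧ s₂ = b₁ :: s₁) ∨
    (∃ mid, p₂ = p₁ ++ [a₁, b₁] ++ mid ∧ s₁ = mid ++ [a₂, b₂] ++ s₂) ∨
    (∃ mid, p₁ = p₂ ++ [a₂, b₂] ++ mid ∧ s₂ = mid ++ [a₁, b₁] ++ s₁) := by
  induction p₁ generalizing p₂ with
  | nil =>
    cases p₂ with
    | nil =>
      simp only [List.nil_append, List.cons_append, List.cons.injEq] at h₂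
      obtain ⟨rfl, rfl, rfl⟩ := h₂
      exact Or.inl ⟨rfl, rfl, rfl, rfl⟩
    | cons x p₂' =>
      simp only [List.nil_append, List.cons_append, List.cons.injEq] at h₂
      obtain ⟨rfl, h₂⟩ := h₂
      cases p₂' with
      | nil =>
        simp only [List.nil_append, List.cons.injEq] at h₂
        obtain ⟨rfl, rfl⟩ := h₂
        exact Or.inr (Or.inl ⟨rfl, rfl, rfl⟩)
      | cons x' p₂'' =>
        simp only [List.cons_append, List.cons.injEq] at h₂
        obtain ⟨rfl, h₂⟩ := h₂
        exact Or.inr (Or.inr (Or.inr (Or.inl ⟨p₂'', by simp, h₂⟩)))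
  | cons y p₁' ih =>
    cases p₂ with
    | nil =>
      simp only [List.nil_append, List.cons_append, List.cons.injEq] at h₂
      obtain ⟨rfl, h₂⟩ := h₂
      cases p₁' with
      | nil =>
        simp only [List.nil_append, List.cons.injEq] at h₂
        obtain ⟨rfl, rfl⟩ := h₂
        exact Or.inr (Or.inr (Or.inl ⟨rfl, rfl, rfl⟩))
      | cons x' p₁'' =>
        simp only [List.cons_append, List.cons.injEq] at h₂
        obtain ⟨rfl, h₂⟩ := h₂
        exact Or.inr (Or.inr (Or.inr (Or.inr ⟨p₁'', by simp, h₂.symm⟩)))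
    | cons x p₂' =>
      simp only [List.cons_append, List.cons.injEq] at h₂
      obtain ⟨rfl, h₂⟩ := h₂
      rcases ih h₂ with ⟨h3, h4, h5, h6⟩ | ⟨h3, h4, h5⟩ | ⟨h3, h4, h5⟩ |
        ⟨mid, h3, h4⟩ | ⟨mid, h3, h4⟩
      · exact Or.inl ⟨by rw [h3], h4, h5, h6⟩
      · exact Or.inr (Or.inl ⟨by simp [h3], h4, h5⟩)
      · exact Or.inr (Or.inr (Or.inl ⟨by simp [h3], h4, h5⟩))
      · exact Or.inr (Or.inr (Or.inr (Or.inl ⟨mid, by simp [h3], h4⟩)))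
      · exact Or.inr (Or.inr (Or.inr (Or.inr ⟨mid, by simp [h3], h4⟩)))

theorem dead_step {D : Set ((α × α × α) × (α × α × α))} {u u' : List (WSym α)}
    (hs : Step2 D u u') (hd : Dead u) : Dead u' := by
  obtain ⟨p, s, q₁, q₂, q₃, q₄, rfl⟩ := hd
  obtain ⟨a, b, c, d, e, f, _, hcase⟩ := hs
  have main : ∀ (A B A' B' : WSym α) (p₀ s₀ : List (WSym α)),
      (p ++ [WSym.right q₁ q₂, WSym.left q₃ q₄] ++ s) = p₀ ++ [A, B] ++ s₀ →
      u' = p₀ ++ [A', B'] ++ s₀ →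
      (∀ x y, A ≠ WSym.left x y) → (∀ x y, B ≠ WSym.right x y) →
      ((∀ x y, A ≠ WSym.right x y) ∨ (∀ x y, B ≠ WSym.left x y)) →
      Dead u' := by
    intro A B A' B' p₀ s₀ h1 h2 hA hB hAB
    subst h2
    rcases two_factor h1 with ⟨h3, h4, h5, h6⟩ | ⟨h3, h4, h5⟩ |
      ⟨h3, h4, h5⟩ | ⟨mid, h3, h4⟩ | ⟨mid, h3, h4⟩
    · -- same window: A = right, B = left: excluded
      rcases hAB with h | h
      · exact absurd h4.symm (h _ _)
      · exact absurd h5.symm (h _ _)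
    · -- p₀ = p ++ [R]:  A = left : excluded
      exact absurd h4.symm (hA _ _)
    · -- p = p₀ ++ [A]:  B = right : excluded
      exact absurd h4 (hB _ _)
    · -- [A,B] inside s
      exact ⟨p, mid ++ [A', B'] ++ s₀, q₁, q₂, q₃, q₄, by simp [h3]⟩
    · -- [R,L] inside s₀
      exact ⟨p₀ ++ [A', B'] ++ mid, s, q₁, q₂, q₃, q₄, by simp [h4]⟩
  rcases hcase with ⟨p₀, s₀, h1, h2⟩ | ⟨x, p₀, s₀, h1, h2⟩ | ⟨y, p₀, s₀, h1, h2⟩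
  · exact main _ _ _ _ p₀ s₀ h1 h2 (fun x y h => by cases h) (fun x y h => by cases h)
      (Or.inl (fun x y h => by cases h))
  · exact main _ _ _ _ p₀ s₀ h1 h2 (fun x' y h => by cases h) (fun x' y h => by cases h)
      (Or.inl (fun x' y h => by cases h))
  · exact main _ _ _ _ p₀ s₀ h1 h2 (fun x y' h => by cases h) (fun x y' h => by cases h)
      (Or.inr (fun x y' h => by cases h))

end RedAux

namespace RedAux

variable {α : Type*}

theorem chunk_single {M E : RSt α} {Tw : List (Option α)} {kw : ℕ} {W : WSym α}
    (h : Chunk M Tw [W] E kw) :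
    (∃ s y, W = .pair s y ∧ M = .ok s ∧ E = .ok y ∧ Tw = [y] ∧ kw = 0) ∨
    (∃ s a d, W = .pair s (some a) ∧ M = .ok s ∧ E = .needL a d ∧ Tw = [some d] ∧ kw = 0) ∨
    (∃ a b d e, W = .left (a,b) (d,e) ∧ M = .needL a d ∧ E = .ok (some e) ∧ Tw = [some e] ∧ kw = 1) ∨
    (∃ a b d a' d', W = .left (a,b) (d,a') ∧ M = .needL a d ∧ E = .needL a' d' ∧ Tw = [some d'] ∧ kw = 1) ∨
    (∃ b c e f, W = .right (b,c) (e,f) ∧ M = .ok (some e) ∧ E = .ok (some c) ∧ Tw = [some f] ∧ kw = 1) := by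
  cases h
  case cons t h' =>
    cases h'
    exact Or.inl ⟨_, _, rfl, rfl, rfl, rfl, rfl⟩
  case pre t a d h' =>
    cases h'
    exact Or.inr (Or.inl ⟨_, _, _, rfl, rfl, rfl, rfl, rfl⟩)
  case lcons t a b d e h' =>
    cases h'
    exact Or.inr (Or.inr (Or.inl ⟨_, _, _, _, rfl, rfl, rfl, rfl, rfl⟩))
  case lcons' t a b d a' d' h' =>
    cases h'
    exact Or.inr (Or.inr (Or.inr (Or.inl ⟨_, _, _, _, _, rfl, rfl, rfl, rfl, rfl⟩)))
  case rcons t b c e f h' =>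
    cases h'
    exact Or.inr (Or.inr (Or.inr (Or.inr ⟨_, _, _, _, rfl, rfl, rfl, rfl, rfl⟩)))

end RedAux

namespace RedAux

variable {α : Type*}

theorem step_inv {D : Set ((α × α × α) × (α × α × α))} {z : List α}
    {u u' : List (WSym α)} {E : RSt α} {k : ℕ}
    (hc : Chunk (.ok none) (z.map some ++ [none]) u E k) (hs : Step2 D u u') :
    (∃ z' E', Chunk (.ok none) (z'.map some ++ [none]) u' E' (k + 2) ∧ Step3 D z z') ∨
    (∃ E' k', Chunk (.ok none) (z.map some ++ [none]) u' E' k' ∧ k = k' + 1) ∨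
    Dead u' := by
  obtain ⟨a, b, c, d, e, f, hr, hcase⟩ := hs
  rcases hcase with ⟨p, s, hu, hu'⟩ | ⟨x, p, s, hu, hu'⟩ | ⟨y, p, s, hu, hu'⟩
  · -- type 1 : (ab)(bc) → L R
    subst hu hu'
    rw [show p ++ [WSym.pair (some a) (some b), WSym.pair (some b) (some c)] ++ s
        = p ++ (WSym.pair (some a) (some b) :: WSym.pair (some b) (some c) :: s) by simp] at hc
    obtain ⟨T₁, T₂, M, k₁, k₂, hT, hk, hc1, hc2⟩ := chunk_split hc
    cases hc2
    case pre t₂ h2 => cases h2  -- nothing emits a pair from a `needL` state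
    case cons t₂ h2 =>
      -- first pair read by `cons`, M = ok (some a)
      cases h2
      case pre t₃ d₁ h3 =>
        -- second pair is a `pre`: next symbol must be a left marker (or end)
        cases h3
        case nil =>
          exact absurd (by simpa using hT)
            (fun h => last_ne (T₁ := T₁ ++ [some b]) (by simpa using h))
        case lcons t₄ u₄ k₄ b₂ e₂ h4 =>
          exact Or.inr (Or.inr ⟨p ++ [WSym.left (a,b) (d,e)], u₄,
            (b,c), (e,f), (c,b₂), (d₁,e₂), by simp⟩)
        case lcons' t₄ u₄ k₄ b₂ a₃ d₃ h4 =>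
          exact Or.inr (Or.inr ⟨p ++ [WSym.left (a,b) (d,e)], u₄,
            (b,c), (e,f), (c,b₂), (d₁,a₃), by simp⟩)
      case cons t₃ h3 =>
        -- both pairs clean; analyze the predecessor of the first pair
        rcases List.eq_nil_or_concat p with rfl | ⟨p', W, rfl⟩
        · cases hc1  -- would force ok none = ok (some a)
        · rw [List.concat_eq_append] at hc1 ⊢
          obtain ⟨T₁', Tw, M', k₁', kw, hT1, hk1, hp', hw⟩ := chunk_split hc1
          rcases chunk_single hw with
            ⟨s', y', hW, hM, hE, hTw, hkw⟩ | ⟨s', a', d', hW, hM, hE, hTw, hkw⟩ |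
            ⟨a₀, b₀, d₀, e₀, hW, hM, hE, hTw, hkw⟩ |
            ⟨a₀, b₀, d₀, a₁, d₁, hW, hM, hE, hTw, hkw⟩ |
            ⟨b₀, c₀, e₀, f₀, hW, hM, hE, hTw, hkw⟩
          · -- W is a clean pair: genuine 3-substitution
            obtain rfl : y' = some a := by injection hE with h'; exact h'.symm
            subst hW hM hTw hkw hT1
            have hbase : z.map some ++ [none] = T₁' ++ [some a, some b, some c] ++ t₃ := by
              rw [hT]; simp
            obtain ⟨z₁, z₂, hz, hz1, hz2⟩ := base_split hbase
            refine Or.inl ⟨z₁ ++ [d, e, f] ++ z₂, E, ?_, ?_⟩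
            · have c1 : Chunk (.ok s') (some d :: some e :: some f :: t₃)
                  (WSym.pair s' (some a) :: WSym.left (a,b) (d,e) :: WSym.right (b,c) (e,f) :: s)
                  E (k₂ + 1 + 1) :=
                .pre s' a d (.lcons a b d e (.rcons b c e f h3))
              have h6 := chunk_append hp' c1
              have hkk : k + 2 = k₁' + (k₂ + 1 + 1) := by omega
              rw [hkk, show (z₁ ++ [d, e, f] ++ z₂).map some ++ [none]
                  = T₁' ++ (some d :: some e :: some f :: t₃) by rw [hz1, hz2]; simp]
              rw [show p' ++ [WSym.pair s' (some a)] ++ [WSym.left (a,b) (d,e), WSym.right (b,c) (e,f)] ++ s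
                  = p' ++ (WSym.pair s' (some a) :: WSym.left (a,b) (d,e) :: WSym.right (b,c) (e,f) :: s) by simp]
              exact h6
            · exact ⟨((a,b,c),(d,e,f)), hr, z₁, z₂, by simpa using hz, rfl⟩
          · exact nomatch hE
          · -- W is a pending left marker: stack a new site
            have ha : a = e₀ := by injection hE with h'; injection h'
            subst ha
            subst hW hM hTw hkw hT1
            have hbase : z.map some ++ [none] = T₁' ++ [some a, some b, some c] ++ t₃ := by
              rw [hT]; simp
            obtain ⟨z₁, z₂, hz, hz1, hz2⟩ := base_split hbase
            refine Or.inl ⟨z₁ ++ [d, e, f] ++ z₂, E, ?_, ?_⟩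
            · have c1 : Chunk (.needL a₀ d₀) (some d :: some e :: some f :: t₃)
                  (WSym.left (a₀,b₀) (d₀,a) :: WSym.left (a,b) (d,e) :: WSym.right (b,c) (e,f) :: s)
                  E (k₂ + 1 + 1 + 1) :=
                .lcons' a₀ b₀ d₀ a d (.lcons a b d e (.rcons b c e f h3))
              have h6 := chunk_append hp' c1
              have hkk : k + 2 = k₁' + (k₂ + 1 + 1 + 1) := by omega
              rw [hkk, show (z₁ ++ [d, e, f] ++ z₂).map some ++ [none]
                  = T₁' ++ (some d :: some e :: some f :: t₃) by rw [hz1, hz2]; simp]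
              rw [show p' ++ [WSym.left (a₀,b₀) (d₀,a)] ++ [WSym.left (a,b) (d,e), WSym.right (b,c) (e,f)] ++ s
                  = p' ++ (WSym.left (a₀,b₀) (d₀,a) :: WSym.left (a,b) (d,e) :: WSym.right (b,c) (e,f) :: s) by simp]
              exact h6
            · exact ⟨((a,b,c),(d,e,f)), hr, z₁, z₂, by simpa using hz, rfl⟩
          · exact nomatch hE
          · -- W is a pending right marker: deadlock created
            subst hW
            exact Or.inr (Or.inr ⟨p', WSym.right (b,c) (e,f) :: s,
              (b₀,c₀), (e₀,f₀), (a,b), (d,e), by simp⟩)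
  · -- type 2 : (xa) L → (xd)(de)
    subst hu hu'
    rw [show p ++ [WSym.pair x (some a), WSym.left (a,b) (d,e)] ++ s
        = p ++ (WSym.pair x (some a) :: WSym.left (a,b) (d,e) :: s) by simp] at hc
    obtain ⟨T₁, T₂, M, k₁, k₂, hT, hk, hc1, hc2⟩ := chunk_split hc
    cases hc2
    case cons t₂ h2 => cases h2
    case pre t₂ d₁ h2 =>
      cases h2
      case lcons t₃ k₃ h3 =>
        have c1 : Chunk (.ok x) (some d :: some e :: t₃)
            (WSym.pair x (some d) :: WSym.pair (some d) (some e) :: s) E k₃ :=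
          .cons x (some d) (.cons (some d) (some e) h3)
        have h6 := chunk_append hc1 c1
        refine Or.inr (Or.inl ⟨E, k₁ + k₃, ?_, by omega⟩)
        rw [hT, show p ++ [WSym.pair x (some d), WSym.pair (some d) (some e)] ++ s
            = p ++ (WSym.pair x (some d) :: WSym.pair (some d) (some e) :: s) by simp]
        exact h6
      case lcons' t₃ k₃ d₃ h3 =>
        have c1 : Chunk (.ok x) (some d :: some d₃ :: t₃)
            (WSym.pair x (some d) :: WSym.pair (some d) (some e) :: s) E k₃ :=
          .cons x (some d) (.pre (some d) e d₃ h3)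
        have h6 := chunk_append hc1 c1
        refine Or.inr (Or.inl ⟨E, k₁ + k₃, ?_, by omega⟩)
        rw [hT, show p ++ [WSym.pair x (some d), WSym.pair (some d) (some e)] ++ s
            = p ++ (WSym.pair x (some d) :: WSym.pair (some d) (some e) :: s) by simp]
        exact h6
  · -- type 3 : R (cy) → (ef)(fy)
    subst hu hu'
    rw [show p ++ [WSym.right (b,c) (e,f), WSym.pair (some c) y] ++ s
        = p ++ (WSym.right (b,c) (e,f) :: WSym.pair (some c) y :: s) by simp] at hc
    obtain ⟨T₁, T₂, M, k₁, k₂, hT, hk, hc1, hc2⟩ := chunk_split hc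
    cases hc2
    case rcons t₂ k₂' h2 =>
      cases h2
      case cons t₃ h3 =>
        have c1 : Chunk (.ok (some e)) (some f :: y :: t₃)
            (WSym.pair (some e) (some f) :: WSym.pair (some f) y :: s) E k₂' :=
          .cons (some e) (some f) (.cons (some f) y h3)
        have h6 := chunk_append hc1 c1
        refine Or.inr (Or.inl ⟨E, k₁ + k₂', ?_, by omega⟩)
        rw [hT, show p ++ [WSym.pair (some e) (some f), WSym.pair (some f) y] ++ s
            = p ++ (WSym.pair (some e) (some f) :: WSym.pair (some f) y :: s) by simp]
        exact h6
      case pre t₃ a₁ d₁ h3 =>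
        have c1 : Chunk (.ok (some e)) (some f :: some d₁ :: t₃)
            (WSym.pair (some e) (some f) :: WSym.pair (some f) (some a₁) :: s) E k₂' :=
          .cons (some e) (some f) (.pre (some f) a₁ d₁ h3)
        have h6 := chunk_append hc1 c1
        refine Or.inr (Or.inl ⟨E, k₁ + k₂', ?_, by omega⟩)
        rw [hT, show p ++ [WSym.pair (some e) (some f), WSym.pair (some f) (some a₁)] ++ s
            = p ++ (WSym.pair (some e) (some f) :: WSym.pair (some f) (some a₁) :: s) by simp]
        exact h6

end RedAux

namespace RedAux

variable {α : Type*}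

theorem chunk_pairs {S : RSt α} {T : List (Option α)} {u : List (WSym α)} {E : RSt α} {k : ℕ}
    (h : Chunk S T u E k) (hp : ∀ x ∈ u, ∃ a b, x = WSym.pair a b) :
    k = 0 ∧ (∀ a d, S = .needL a d → u = [] ∧ T = [] ∧ E = S) ∧
      (T = u.map sc ∨ ∃ (T₀ : List (Option α)) (a d : α), T = T₀ ++ [some d] ∧ E = .needL a d) := by
  induction h with
  | nil S => exact ⟨rfl, fun a d _ => ⟨rfl, rfl, rfl⟩, Or.inl rfl⟩
  | cons s y h' ih =>
    obtain ⟨hk, -, hdisj⟩ := ih (fun x hx => hp x (List.mem_cons_of_mem _ hx))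
    refine ⟨hk, (fun a d hS => by cases hS), ?_⟩
    rcases hdisj with hT | ⟨T₀, a, d, hT, hE⟩
    · exact Or.inl (by simp [sc, hT])
    · exact Or.inr ⟨y :: T₀, a, d, by simp [hT], hE⟩
  | pre s a d h' ih =>
    obtain ⟨hk, hneed, -⟩ := ih (fun x hx => hp x (List.mem_cons_of_mem _ hx))
    obtain ⟨rfl, rfl, hE⟩ := hneed a d rfl
    exact ⟨hk, (fun a' d' hS => by cases hS),
      Or.inr ⟨[], a, d, rfl, hE⟩⟩
  | lcons a b d e h' ih =>
    obtain ⟨a', b', habs⟩ := hp _ List.mem_cons_self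
    cases habs
  | lcons' a b d a' d' h' ih =>
    obtain ⟨a'', b'', habs⟩ := hp _ List.mem_cons_self
    cases habs
  | rcons b c e f h' ih =>
    obtain ⟨a', b', habs⟩ := hp _ List.mem_cons_self
    cases habs

theorem chunk_clean {z w : List α} {E : RSt α} {k : ℕ}
    (h : Chunk (.ok none) (z.map some ++ [none]) (encS w) E k) : z = w ∧ k = 0 := by
  have hp : ∀ x ∈ encS w, ∃ a b, x = WSym.pair a b := by
    rw [encS_eq_win]; exact win_pairs
  obtain ⟨hk, -, hdisj⟩ := chunk_pairs h hp
  rcases hdisj with hT | ⟨T₀, a, d, hT, -⟩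
  · have h2 : z.map some ++ [none] = w.map some ++ [none] := by
      rw [hT, encS_eq_win, map_sc_win]
    have h3 : z.map some = w.map some := by
      have := congrArg (fun l => List.take (l.length - 1) l) h2
      simpa using this
    exact ⟨List.map_injective_iff.mpr (Option.some_injective α) h3, hk⟩
  · exact absurd hT last_ne

theorem backward {D : Set ((α × α × α) × (α × α × α))} {v : List α}
    {u : List (WSym α)} {m : ℕ}
    (hch : StepChain (Step2 D) (encS v) u m) :
    (∃ z t E k, Chunk (.ok none) (z.map some ++ [none]) u E k ∧
      StepChain (Step3 D) v z t ∧ m + k = 3 * t) ∨ Dead u := by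
  induction hch with
  | refl =>
    obtain ⟨E, hE⟩ := win_chunk (v.map some ++ [none]) none
    exact Or.inl ⟨v, 0, E, 0, by rw [encS_eq_win]; exact hE, .refl v, by ring⟩
  | tail hch hst ih =>
    rcases ih with ⟨z, t, E, k, hc, h3, hmk⟩ | hd
    · rcases step_inv hc hst with ⟨z', E', hc', hs3⟩ | ⟨E', k', hc', hkk⟩ | hd
      · exact Or.inl ⟨z', t + 1, E', k + 2, hc', .tail h3 hs3, by omega⟩
      · exact Or.inl ⟨z, t, E', k', hc', h3, by omega⟩
      · exact Or.inr hd
    · exact Or.inr (dead_step hst hd)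

theorem forward_sim {D : Set ((α × α × α) × (α × α × α))} {v w : List α}
    (h : Step3 D v w) : StepChain (Step2 D) (encS v) (encS w) 3 := by
  obtain ⟨⟨⟨a, b, c⟩, ⟨d, e, f⟩⟩, hr, p, s, hv, hw⟩ := h
  subst hv hw
  obtain ⟨Y, tB, hys⟩ : ∃ Y tB, s.map some ++ [none] = Y :: tB := by
    cases s with
    | nil => exact ⟨none, [], rfl⟩
    | cons s0 s' => exact ⟨some s0, s'.map some ++ [none], by simp⟩
  have henc : ∀ a' b' c' : α, encS (p ++ [a', b', c'] ++ s)
      = win none (p.map some) ++ (WSym.pair ((p.map some).getLastD none) (some a') ::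
          WSym.pair (some a') (some b') :: WSym.pair (some b') (some c') ::
          WSym.pair (some c') Y :: win Y tB) := by
    intro a' b' c'
    rw [encS_eq_win, show (p ++ [a', b', c'] ++ s).map some ++ [none]
        = p.map some ++ ([some a', some b', some c'] ++ (s.map some ++ [none])) by simp,
      win_append, hys]
    simp [win]
  rw [henc, henc]
  set A := win none (p.map some)
  set X := (p.map some).getLastD none
  set B := win Y tB
  have st1 : Step2 D (A ++ (WSym.pair X (some a) :: WSym.pair (some a) (some b) ::
        WSym.pair (some b) (some c) :: WSym.pair (some c) Y :: B))
      (A ++ (WSym.pair X (some a) :: WSym.left (a,b) (d,e) :: WSym.right (b,c) (e,f) ::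
        WSym.pair (some c) Y :: B)) :=
    ⟨a, b, c, d, e, f, hr, Or.inl ⟨A ++ [WSym.pair X (some a)],
      WSym.pair (some c) Y :: B, by simp, by simp⟩⟩
  have st2 : Step2 D (A ++ (WSym.pair X (some a) :: WSym.left (a,b) (d,e) :: WSym.right (b,c) (e,f) ::
        WSym.pair (some c) Y :: B))
      (A ++ (WSym.pair X (some d) :: WSym.pair (some d) (some e) :: WSym.right (b,c) (e,f) ::
        WSym.pair (some c) Y :: B)) :=
    ⟨a, b, c, d, e, f, hr, Or.inr (Or.inl ⟨X, A,
      WSym.right (b,c) (e,f) :: WSym.pair (some c) Y :: B, by simp, by simp⟩)⟩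
  have st3 : Step2 D (A ++ (WSym.pair X (some d) :: WSym.pair (some d) (some e) :: WSym.right (b,c) (e,f) ::
        WSym.pair (some c) Y :: B))
      (A ++ (WSym.pair X (some d) :: WSym.pair (some d) (some e) :: WSym.pair (some e) (some f) ::
        WSym.pair (some f) Y :: B)) :=
    ⟨a, b, c, d, e, f, hr, Or.inr (Or.inr ⟨Y,
      A ++ [WSym.pair X (some d), WSym.pair (some d) (some e)], B, by simp, by simp⟩)⟩
  exact .tail (.tail (.tail (.refl _) st1) st2) st3

theorem forward_chain {D : Set ((α × α × α) × (α × α × α))} {v w : List α} {m : ℕ}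
    (h : StepChain (Step3 D) v w m) : StepChain (Step2 D) (encS v) (encS w) (3 * m) := by
  induction h with
  | refl => exact .refl _
  | tail hch hst ih =>
    rw [show 3 * (_ + 1) = 3 * _ + 3 by ring]
    exact stepChain_append ih (forward_sim hst)

end RedAux


/-- Reduction cost correspondence (Hamming case): for equal-length strings `v, w`
over `Σ`, `δ₃(v,w) ≤ h` iff `δ₂(E(v),E(w)) ≤ 3h`, where `δ₃` uses the allowed
unit-cost `3`-substitutions and `δ₂` the reduction's unit-cost `2`-substitutions. -/
theorem reduction_cost_correspondence {α : Type*} (D : Set ((α × α × α) × (α × α × α)))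
    (h : ℕ) (v w : List α) (hlen : v.length = w.length) :
    rDist (Step3 D) v w ≤ (h : ℕ∞) ↔
      rDist (Step2 D) (encS v) (encS w) ≤ ((3 * h : ℕ) : ℕ∞) := by
  constructor
  · intro h3le
    obtain ⟨m, hm, hch⟩ := RedAux.rDist_le_iff.mp h3le
    exact RedAux.rDist_le_iff.mpr ⟨3 * m, by omega, RedAux.forward_chain hch⟩
  · intro h2le
    obtain ⟨m, hm, hch⟩ := RedAux.rDist_le_iff.mp h2le
    rcases RedAux.backward hch with ⟨z, t, E, k, hc, h3, hmk⟩ | hd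
    · obtain ⟨rfl, hk⟩ := RedAux.chunk_clean hc
      exact RedAux.rDist_le_iff.mpr ⟨t, by omega, h3⟩
    · obtain ⟨p, s, q₁, q₂, q₃, q₄, hD⟩ := hd
      have hmem : WSym.left q₃ q₄ ∈ encS w := by rw [hD]; simp
      rw [RedAux.encS_eq_win] at hmem
      obtain ⟨a', b', habs⟩ := RedAux.win_pairs _ hmem
      cases habs
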